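/- For every quadruple of reals b₁ < b₂ < b₃ < b₄, the infimum over x ∈ [b₂, b₃] of E_x[τ(b₁) ∧ σ(b₄)] is strictly positive; that is, the expected first exit time of the process x + X from the open interval (b₁, b₄) is bounded away from zero uniformly over starting points x in [b₂, b₃]. -/

import Mathlib

open MeasureTheory ProbabilityTheory Filter Set
open scoped ENNReal NNReal Classical Topology

noncomputable section

namespace MFGPaper

variable {Ω : Type*}

/-- A real function is càdlàg on `[0, ∞)`. -/
def CadlagOn (g : ℝ → ℝ) : Prop :=
  ∀ t : ℝ, 0 ≤ t →
    ContinuousWithinAt g (Set.Ici t) t ∧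
      (0 < t → ∃ l : ℝ, Filter.Tendsto g (nhdsWithin t (Set.Iio t)) (nhds l))

/-- `X` is a Lévy process with finite mean on the filtered probability space. -/
structure IsLevy [mΩ : MeasurableSpace Ω] (P : Measure Ω) (𝓕 : Filtration ℝ mΩ)
    (X : ℝ → Ω → ℝ) : Prop where
  adapted : Adapted 𝓕 X
  init : ∀ᵐ ω ∂P, X 0 ω = 0
  cadlag : ∀ᵐ ω ∂P, CadlagOn fun t => X t ω
  indep_incr : ∀ s t : ℝ, 0 ≤ s → s ≤ t →
    Indep (MeasurableSpace.comap (fun ω => X t ω - X s ω) Real.measurableSpace) (𝓕 s) P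
  stat_incr : ∀ s t : ℝ, 0 ≤ s → s ≤ t →
    Measure.map (fun ω => X t ω - X s ω) P = Measure.map (X (t - s)) P
  int_one : Integrable (X 1) P

/-- The process is not a.s. nondecreasing, not a.s. nonincreasing (in time, on `[0,∞)`). -/
def NotMonotoneAS [mΩ : MeasurableSpace Ω] (P : Measure Ω) (X : ℝ → Ω → ℝ) : Prop :=
  ¬ (∀ᵐ ω ∂P, MonotoneOn (fun t => X t ω) (Set.Ici (0 : ℝ))) ∧
    ¬ (∀ᵐ ω ∂P, AntitoneOn (fun t => X t ω) (Set.Ici (0 : ℝ)))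

/-- The process is not a.s. constant. -/
def NotConstantAS [mΩ : MeasurableSpace Ω] (P : Measure Ω) (X : ℝ → Ω → ℝ) : Prop :=
  ¬ (∀ᵐ ω ∂P, ∀ t : ℝ, 0 ≤ t → X t ω = X 0 ω)

/-- First time the translated path `x + X` is `≤ a` (with value `∞` if never). -/
def hitLow (X : ℝ → Ω → ℝ) (x a : ℝ) (ω : Ω) : ℝ≥0∞ :=
  sInf (ENNReal.ofReal '' {s : ℝ | 0 ≤ s ∧ x + X s ω ≤ a})

/-- First time the translated path `x + X` is `≥ b` (with value `∞` if never). -/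
def hitHigh (X : ℝ → Ω → ℝ) (x b : ℝ) (ω : Ω) : ℝ≥0∞ :=
  sInf (ENNReal.ofReal '' {s : ℝ | 0 ≤ s ∧ b ≤ x + X s ω})

/-- `∫_0^T g(s) e^{-ε s} ds` for a (possibly infinite) horizon `T`. -/
def discIntTo (g : ℝ → ℝ) (ε : ℝ) (T : ℝ≥0∞) : ℝ :=
  ∫ s in Set.Ioi (0 : ℝ), (if ENNReal.ofReal s < T then Real.exp (-ε * s) * g s else 0)

/-- `e^{-ε T}`, read as `0` when `T = ∞`. -/
def discAt (ε : ℝ) (T : ℝ≥0∞) : ℝ :=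
  if T = ∞ then 0 else Real.exp (-ε * T.toReal)

/-- The Dynkin-game payoff `M_x^{ε}(τ, σ)` with integrand `ρ`. -/
def payoff [mΩ : MeasurableSpace Ω] (P : Measure Ω) (X : ℝ → Ω → ℝ) (ρ : ℝ → ℝ)
    (qu qd ε x : ℝ) (τ σ : Ω → ℝ≥0∞) : ℝ :=
  ∫ ω, (discIntTo (fun s => ρ (x + X s ω)) ε (min (τ ω) (σ ω))
      + (if σ ω ≤ τ ω then qd * discAt ε (σ ω) else 0)
      - (if τ ω < σ ω then qu * discAt ε (τ ω) else 0)) ∂P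

/-- `ℝ≥0∞`-valued stopping times of the filtration. -/
def IsStoppingTimeE [mΩ : MeasurableSpace Ω] (𝓕 : Filtration ℝ mΩ) (τ : Ω → ℝ≥0∞) : Prop :=
  ∀ t : ℝ, 0 ≤ t → MeasurableSet[𝓕 t] {ω | τ ω ≤ ENNReal.ofReal t}

/-- The value `V_{ε}(x) = sup_τ inf_σ M_x(τ, σ)` of the Dynkin game. -/
def gameValue [mΩ : MeasurableSpace Ω] (P : Measure Ω) (𝓕 : Filtration ℝ mΩ)
    (X : ℝ → Ω → ℝ) (ρ : ℝ → ℝ) (qu qd ε x : ℝ) : ℝ :=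
  ⨆ τ : {τ : Ω → ℝ≥0∞ // IsStoppingTimeE 𝓕 τ},
    ⨅ σ : {σ : Ω → ℝ≥0∞ // IsStoppingTimeE 𝓕 σ},
      payoff P X ρ qu qd ε x τ.1 σ.1

/-- `(A, B)` is a saddle (Nash equilibrium) pair of thresholds for the Dynkin game. -/
def IsSaddle [mΩ : MeasurableSpace Ω] (P : Measure Ω) (𝓕 : Filtration ℝ mΩ)
    (X : ℝ → Ω → ℝ) (ρ : ℝ → ℝ) (qu qd ε : ℝ) (A B : ℝ) : Prop :=
  ∀ x : ℝ, ∀ τ σ : Ω → ℝ≥0∞, IsStoppingTimeE 𝓕 τ → IsStoppingTimeE 𝓕 σ →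
    payoff P X ρ qu qd ε x τ (hitHigh X x B) ≤
        payoff P X ρ qu qd ε x (hitLow X x A) (hitHigh X x B) ∧
      payoff P X ρ qu qd ε x (hitLow X x A) (hitHigh X x B) ≤
        payoff P X ρ qu qd ε x (hitLow X x A) σ

/-- Standing assumptions on the running cost `c`, with `cx`, `cxx` its partial
derivatives in the first variable. -/
structure CostAssumptions (c cx cxx : ℝ → ℝ → ℝ) : Prop where
  cont : Continuous fun q : ℝ × ℝ => c q.1 q.2
  nonneg : ∀ x y, 0 ≤ c x y
  hasDeriv1 : ∀ y x, HasDerivAt (fun z => c z y) (cx x y) x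
  hasDeriv2 : ∀ y x, HasDerivAt (fun z => cx z y) (cxx x y) x
  cxx_cont : ∀ y, Continuous fun x => cxx x y
  strict_convex : ∀ y, StrictConvexOn ℝ Set.univ fun x => c x y
  min_at_zero : ∀ y x, c 0 y ≤ c x y
  cxx_unif_pos : ∀ r : ℝ, 0 < r → ∃ δ : ℝ, 0 < δ ∧ ∀ x y : ℝ, r ≤ |x| → δ ≤ cxx x y
  lin_growth : ∃ N : ℝ, 0 < N ∧ ∀ y : ℝ, ∃ M : ℝ, 0 < M ∧ ∀ x : ℝ, N * |x| ≤ c x y + M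

/-- Integrability of the discounted derivative of the cost along the process. -/
def CxIntegrable [mΩ : MeasurableSpace Ω] (P : Measure Ω) (X : ℝ → Ω → ℝ)
    (cx : ℝ → ℝ → ℝ) : Prop :=
  ∀ x y ε : ℝ, 0 < ε →
    (∫⁻ ω, (∫⁻ s in Set.Ioi (0 : ℝ),
      ENNReal.ofReal (|cx (x + X s ω) y| * Real.exp (-ε * s))) ∂P) < ∞

/-- Admissible controls: nonnegative, adapted, right-continuous nondecreasing,
integrable at every time. -/
structure IsAdmissible [mΩ : MeasurableSpace Ω] (P : Measure Ω) (𝓕 : Filtration ℝ mΩ)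
    (U D : ℝ → Ω → ℝ) : Prop where
  nonnegU : ∀ t ω, 0 ≤ U t ω
  nonnegD : ∀ t ω, 0 ≤ D t ω
  adaptedU : Adapted 𝓕 U
  adaptedD : Adapted 𝓕 D
  monoU : ∀ᵐ ω ∂P, MonotoneOn (fun t => U t ω) (Set.Ici (0 : ℝ))
  monoD : ∀ᵐ ω ∂P, MonotoneOn (fun t => D t ω) (Set.Ici (0 : ℝ))
  rcU : ∀ᵐ ω ∂P, ∀ t : ℝ, 0 ≤ t → ContinuousWithinAt (fun s => U s ω) (Set.Ici t) t
  rcD : ∀ᵐ ω ∂P, ∀ t : ℝ, 0 ≤ t → ContinuousWithinAt (fun s => D s ω) (Set.Ici t) t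
  intU : ∀ t : ℝ, 0 ≤ t → Integrable (U t) P
  intD : ∀ t : ℝ, 0 ≤ t → Integrable (D t) P

/-- The Lebesgue–Stieltjes measure of a path (junk value `0` if the path is not
monotone right-continuous). -/
def pathMeasure (g : ℝ → ℝ) : Measure ℝ :=
  if h : Monotone g ∧ ∀ x : ℝ, ContinuousWithinAt g (Set.Ici x) x then
    StieltjesFunction.measure ⟨g, h.1, h.2⟩
  else 0

/-- `∫_{(0,∞)} e^{-ε s} dU_s` along the path `t ↦ U t ω` (extended by its value
at `0` to the negative half-line). -/
def discControlCost (ε : ℝ) (U : ℝ → Ω → ℝ) (ω : Ω) : ℝ :=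
  ∫ s in Set.Ioi (0 : ℝ), Real.exp (-ε * s) ∂(pathMeasure fun t => U (max t 0) ω)

/-- The `ε`-discounted cost of an admissible control `(U, D)`. -/
def Jdisc [mΩ : MeasurableSpace Ω] (P : Measure Ω) (X : ℝ → Ω → ℝ) (c : ℝ → ℝ → ℝ)
    (qu qd ε x p : ℝ) (U D : ℝ → Ω → ℝ) : ℝ :=
  ∫ ω, ((∫ s in Set.Ioi (0 : ℝ), Real.exp (-ε * s) * c (x + X s ω + U s ω - D s ω) p)
      + qu * discControlCost ε U ω + qd * discControlCost ε D ω
      + qu * U 0 ω + qd * D 0 ω) ∂P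

/-- The `ε`-discounted value function `G_ε(x, p)`. -/
def Gdisc [mΩ : MeasurableSpace Ω] (P : Measure Ω) (𝓕 : Filtration ℝ mΩ)
    (X : ℝ → Ω → ℝ) (c : ℝ → ℝ → ℝ) (qu qd ε x p : ℝ) : ℝ :=
  ⨅ UD : {UD : (ℝ → Ω → ℝ) × (ℝ → Ω → ℝ) // IsAdmissible P 𝓕 UD.1 UD.2},
    Jdisc P X c qu qd ε x p UD.1.1 UD.1.2

/-- The ergodic cost of an admissible control `(U, D)`. -/
def Jerg [mΩ : MeasurableSpace Ω] (P : Measure Ω) (X : ℝ → Ω → ℝ) (c : ℝ → ℝ → ℝ)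
    (qu qd x p : ℝ) (U D : ℝ → Ω → ℝ) : ℝ :=
  Filter.limsup
    (fun T : ℝ => (1 / T) *
      ∫ ω, ((∫ s in Set.Ioc (0 : ℝ) T, c (x + X s ω + U s ω - D s ω) p)
        + qu * U T ω + qd * D T ω) ∂P)
    Filter.atTop

/-- The ergodic value function `G(x, p)`. -/
def Gerg [mΩ : MeasurableSpace Ω] (P : Measure Ω) (𝓕 : Filtration ℝ mΩ)
    (X : ℝ → Ω → ℝ) (c : ℝ → ℝ → ℝ) (qu qd x p : ℝ) : ℝ :=
  ⨅ UD : {UD : (ℝ → Ω → ℝ) × (ℝ → Ω → ℝ) // IsAdmissible P 𝓕 UD.1 UD.2},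
    Jerg P X c qu qd x p UD.1.1 UD.1.2

/-- `(U, D)` is the reflecting control at barriers `a ≤ b` for the process started
at `x` (when `a = b` this is the degenerate control freezing the state at `a`). -/
structure IsReflecting [mΩ : MeasurableSpace Ω] (P : Measure Ω) (𝓕 : Filtration ℝ mΩ)
    (X : ℝ → Ω → ℝ) (x a b : ℝ) (U D : ℝ → Ω → ℝ) : Prop where
  adm : IsAdmissible P 𝓕 U D
  initU : ∀ᵐ ω ∂P, U 0 ω = max (a - x) 0
  initD : ∀ᵐ ω ∂P, D 0 ω = max (x - b) 0
  mem_Icc : ∀ᵐ ω ∂P, ∀ t : ℝ, 0 ≤ t → x + X t ω + U t ω - D t ω ∈ Set.Icc a b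
  flatU : ∀ᵐ ω ∂P, ∀ s t : ℝ, 0 ≤ s → s ≤ t →
    (∀ u ∈ Set.Icc s t, a < x + X u ω + U u ω - D u ω) → U t ω = U s ω
  flatD : ∀ᵐ ω ∂P, ∀ s t : ℝ, 0 ≤ s → s ≤ t →
    (∀ u ∈ Set.Icc s t, x + X u ω + U u ω - D u ω < b) → D t ω = D s ω

/-- Convergence in total variation of a family of laws to `μ`. -/
def TVTendsto (ν : ℝ → Measure ℝ) (μ : Measure ℝ) : Prop :=
  Filter.Tendsto (fun t : ℝ => ⨆ s : Set ℝ, |(ν t s).toReal - (μ s).toReal|)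
    Filter.atTop (nhds 0)

/-- The mean-field term `p^{a,b} = ∫ f dμ_{a,b}` (with `p^{c,c} = f(c)` in the
degenerate case). -/
def pbar (f : ℝ → ℝ) (μ : ℝ → ℝ → Measure ℝ) (a b : ℝ) : ℝ :=
  if a < b then ∫ z, f z ∂(μ a b) else f a

/-- `μ` is the family of stationary distributions of the doubly reflected process:
the reflected process exists for all barriers `a < b` and all starting points, and
its time-`t` laws converge in total variation to `μ a b`, a probability measure
carried by `[a, b]`. -/
def IsStationaryFamily [mΩ : MeasurableSpace Ω] (P : Measure Ω) (𝓕 : Filtration ℝ mΩ)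
    (X : ℝ → Ω → ℝ) (μ : ℝ → ℝ → Measure ℝ) : Prop :=
  ∀ a b : ℝ, a < b →
    IsProbabilityMeasure (μ a b) ∧ μ a b (Set.Icc a b)ᶜ = 0 ∧
      ∀ x : ℝ, ∃ U D : ℝ → Ω → ℝ, IsReflecting P 𝓕 X x a b U D ∧
        TVTendsto (fun t => Measure.map (fun ω => x + X t ω + U t ω - D t ω) P) (μ a b)


/-- The value function of the Dynkin game with integrand `cx (·, y)`. -/
def Vval [mΩ : MeasurableSpace Ω] (P : Measure Ω) (𝓕 : Filtration ℝ mΩ)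
    (X : ℝ → Ω → ℝ) (cx : ℝ → ℝ → ℝ) (qu qd ε y x : ℝ) : ℝ :=
  gameValue P 𝓕 X (fun z => cx z y) qu qd ε x

/-- `(a, b)` is an `ε`-discounted mean-field-game equilibrium: the reflecting control
at `(a, b)` attains the `ε`-discounted value against its own induced mean-field term. -/
def IsDiscMFGEquilibrium [mΩ : MeasurableSpace Ω] (P : Measure Ω) (𝓕 : Filtration ℝ mΩ)
    (X : ℝ → Ω → ℝ) (c : ℝ → ℝ → ℝ) (qu qd : ℝ) (f : ℝ → ℝ) (μ : ℝ → ℝ → Measure ℝ)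
    (ε a b : ℝ) : Prop :=
  a ≤ b ∧ ∀ x : ℝ, ∃ U D : ℝ → Ω → ℝ, IsReflecting P 𝓕 X x a b U D ∧
    Gdisc P 𝓕 X c qu qd ε x (pbar f μ a b) = Jdisc P X c qu qd ε x (pbar f μ a b) U D

/-- `(a, b)` is an ergodic mean-field-game equilibrium. -/
def IsErgMFGEquilibrium [mΩ : MeasurableSpace Ω] (P : Measure Ω) (𝓕 : Filtration ℝ mΩ)
    (X : ℝ → Ω → ℝ) (c : ℝ → ℝ → ℝ) (qu qd : ℝ) (f : ℝ → ℝ) (μ : ℝ → ℝ → Measure ℝ)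
    (a b : ℝ) : Prop :=
  a ≤ b ∧ ∀ x : ℝ, ∃ U D : ℝ → Ω → ℝ, IsReflecting P 𝓕 X x a b U D ∧
    Gerg P 𝓕 X c qu qd x (pbar f μ a b) = Jerg P X c qu qd x (pbar f μ a b) U D

/-- For every `b₁ < b₂ < b₃ < b₄`, the expected exit time of
`x + X` from `(b₁, b₄)` is bounded away from zero uniformly over `x ∈ [b₂, b₃]`. -/
theorem exit_time_expectation_pos
    {Ω : Type*} [mΩ : MeasurableSpace Ω] (P : Measure Ω) [IsProbabilityMeasure P]
    (𝓕 : Filtration ℝ mΩ) (X : ℝ → Ω → ℝ)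
    (hX : IsLevy P 𝓕 X)
    (b₁ b₂ b₃ b₄ : ℝ) (h12 : b₁ < b₂) (h23 : b₂ < b₃) (h34 : b₃ < b₄) :
    ∃ δ : ℝ≥0∞, 0 < δ ∧ ∀ x ∈ Set.Icc b₂ b₃,
      δ ≤ ∫⁻ ω, min (hitLow X x b₁ ω) (hitHigh X x b₄ ω) ∂P := by
  -- the safety margin
  set η : ℝ := min (b₂ - b₁) (b₄ - b₃) / 2 with hη_def
  have hη : 0 < η := by
    have h1 : 0 < b₂ - b₁ := by linarith
    have h2 : 0 < b₄ - b₃ := by linarith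
    have := lt_min h1 h2
    positivity
  have hη1 : b₁ < b₂ - η := by
    have := min_le_left (b₂ - b₁) (b₄ - b₃)
    simp only [hη_def]; linarith
  have hη2 : b₃ + η < b₄ := by
    have := min_le_right (b₂ - b₁) (b₄ - b₃)
    simp only [hη_def]; linarith
  -- each X t is measurable
  have hXm : ∀ t : ℝ, Measurable (X t) := fun t =>
    Measurable.mono (hX.adapted t) (𝓕.le t) le_rfl
  -- the events: the path stays within η of 0 on rational times in [0, 1/(n+1)]
  set A : ℕ → Set Ω := fun n =>
    {ω | ∀ q : ℚ, 0 ≤ (q : ℝ) → (q : ℝ) ≤ 1 / ((n : ℝ) + 1) → |X (q : ℝ) ω| ≤ η} with hA_def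
  have hAmeas : ∀ n : ℕ, MeasurableSet (A n) := by
    intro n
    have hrw : A n = ⋂ q : ℚ,
        {ω | 0 ≤ (q : ℝ) → (q : ℝ) ≤ 1 / ((n : ℝ) + 1) → |X (q : ℝ) ω| ≤ η} := by
      ext ω; simp [hA_def, Set.mem_iInter]
    rw [hrw]
    refine MeasurableSet.iInter fun q => ?_
    by_cases h1 : (0 : ℝ) ≤ (q : ℝ)
    · by_cases h2 : (q : ℝ) ≤ 1 / ((n : ℝ) + 1)
      · have : {ω | 0 ≤ (q : ℝ) → (q : ℝ) ≤ 1 / ((n : ℝ) + 1) → |X (q : ℝ) ω| ≤ η}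
            = {ω | |X (q : ℝ) ω| ≤ η} := by
          ext ω; simp only [Set.mem_setOf_eq]
          exact ⟨fun h => h h1 h2, fun h _ _ => h⟩
        rw [this]
        exact measurableSet_le (hXm (q : ℝ)).abs measurable_const
      · have : {ω | 0 ≤ (q : ℝ) → (q : ℝ) ≤ 1 / ((n : ℝ) + 1) → |X (q : ℝ) ω| ≤ η}
            = Set.univ := by
          ext ω; simp only [Set.mem_setOf_eq, Set.mem_univ, iff_true]
          intro _ hq; exact absurd hq h2
        rw [this]; exact MeasurableSet.univ
    · have : {ω | 0 ≤ (q : ℝ) → (q : ℝ) ≤ 1 / ((n : ℝ) + 1) → |X (q : ℝ) ω| ≤ η}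
          = Set.univ := by
        ext ω; simp only [Set.mem_setOf_eq, Set.mem_univ, iff_true]
        intro hq; exact absurd hq h1
      rw [this]; exact MeasurableSet.univ
  -- the a.e. good set
  have Gae : ∀ᵐ ω ∂P, X 0 ω = 0 ∧ CadlagOn fun t => X t ω := hX.init.and hX.cadlag
  -- a.e. every ω belongs to some A n
  have hcov : ∀ᵐ ω ∂P, ω ∈ ⋃ n, A n := by
    filter_upwards [Gae] with ω hω
    obtain ⟨h0, hcad⟩ := hω
    have hc : ContinuousWithinAt (fun t => X t ω) (Set.Ici (0 : ℝ)) 0 :=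
      (hcad 0 le_rfl).1
    rw [Metric.continuousWithinAt_iff] at hc
    obtain ⟨δ', hδ', hball⟩ := hc η hη
    obtain ⟨n, hn⟩ := exists_nat_one_div_lt hδ'
    refine Set.mem_iUnion.2 ⟨n, fun q hq0 hq1 => ?_⟩
    have hqball : dist ((q : ℝ)) (0 : ℝ) < δ' := by
      rw [Real.dist_eq, sub_zero, abs_of_nonneg hq0]
      exact lt_of_le_of_lt hq1 hn
    have := hball (Set.mem_Ici.2 hq0) hqball
    rw [Real.dist_eq, h0, sub_zero] at this
    exact this.le
  -- some A n has positive probability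
  have hex : ∃ n : ℕ, P (A n) ≠ 0 := by
    by_contra h
    push_neg at h
    have h1 : P (⋃ n, A n) = 0 := measure_iUnion_null h
    have h2 : P Set.univ ≤ P (⋃ n, A n) := by
      refine measure_mono_ae ?_
      filter_upwards [hcov] with ω hω _
      exact hω
    rw [h1, measure_univ] at h2
    simp at h2
  obtain ⟨n, hPn⟩ := hex
  set t₀ : ℝ := 1 / ((n : ℝ) + 1) with ht₀_def
  have ht₀ : 0 < t₀ := by positivity
  refine ⟨ENNReal.ofReal t₀ * P (A n), ?_, ?_⟩
  · exact ENNReal.mul_pos (by simp [ENNReal.ofReal_pos, ht₀]) hPn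
  intro x hx
  -- pointwise lower bound on the exit time, on (A n) ∩ good set
  have key : ∀ᵐ ω ∂P, (A n).indicator (fun _ => ENNReal.ofReal t₀) ω ≤
      min (hitLow X x b₁ ω) (hitHigh X x b₄ ω) := by
    filter_upwards [Gae] with ω hω
    by_cases hmem : ω ∈ A n
    · obtain ⟨h0, hcad⟩ := hω
      -- the path stays within η of 0 on all real times in [0, t₀]
      have habs : ∀ s : ℝ, 0 ≤ s → s ≤ t₀ → |X s ω| ≤ η := by
        intro s hs0 hst
        rcases eq_or_lt_of_le hst with heq | hlt
        · -- s = t₀, which is rational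
          have hq : ((1 / ((n : ℚ) + 1) : ℚ) : ℝ) = t₀ := by push_cast; ring
          have := hmem (1 / ((n : ℚ) + 1)) (by rw [hq]; exact ht₀.le) (by rw [hq])
          rwa [hq, ← heq] at this
        · refine le_of_forall_pos_le_add fun ε hε => ?_
          have hc : ContinuousWithinAt (fun t => X t ω) (Set.Ici s) s :=
            (hcad s hs0).1
          rw [Metric.continuousWithinAt_iff] at hc
          obtain ⟨δ', hδ', hball⟩ := hc ε hε
          obtain ⟨q, hq1, hq2⟩ := exists_rat_btwn (lt_min (lt_add_of_pos_right s hδ') hlt)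
          have hqIci : (q : ℝ) ∈ Set.Ici s := le_of_lt hq1
          have hqd : dist ((q : ℝ)) s < δ' := by
            rw [Real.dist_eq, abs_of_pos (by linarith)]
            have := lt_of_lt_of_le hq2 (min_le_left _ _)
            linarith
          have hXq : |X (q : ℝ) ω| ≤ η :=
            hmem q (le_trans hs0 hq1.le)
              (le_trans (lt_of_lt_of_le hq2 (min_le_right _ _)).le le_rfl)
          have hdist : |X (q : ℝ) ω - X s ω| < ε := by
            have := hball hqIci hqd
            rwa [Real.dist_eq] at this
          calc |X s ω| = |X (q : ℝ) ω - (X (q : ℝ) ω - X s ω)| := by ring_nf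
            _ ≤ |X (q : ℝ) ω| + |X (q : ℝ) ω - X s ω| := abs_sub _ _
            _ ≤ η + ε := add_le_add hXq hdist.le
      -- hence the translated path stays in (b₁, b₄) on [0, t₀]
      have hin : ∀ s : ℝ, 0 ≤ s → s ≤ t₀ → b₁ < x + X s ω ∧ x + X s ω < b₄ := by
        intro s hs0 hst
        have := abs_le.1 (habs s hs0 hst)
        constructor
        · have : b₂ - η ≤ x + X s ω := by
            have hxb := hx.1
            linarith [this.1]
          linarith
        · have : x + X s ω ≤ b₃ + η := by
            have hxb := hx.2
            linarith [this.2]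
          linarith
      -- lower bound the hitting times
      have hlow : ENNReal.ofReal t₀ ≤ hitLow X x b₁ ω := by
        refine le_sInf fun y hy => ?_
        obtain ⟨s, ⟨hs0, hsle⟩, rfl⟩ := hy
        refine ENNReal.ofReal_le_ofReal ?_
        by_contra hcon
        push_neg at hcon
        exact absurd hsle (not_le.2 (hin s hs0 hcon.le).1)
      have hhigh : ENNReal.ofReal t₀ ≤ hitHigh X x b₄ ω := by
        refine le_sInf fun y hy => ?_
        obtain ⟨s, ⟨hs0, hsle⟩, rfl⟩ := hy
        refine ENNReal.ofReal_le_ofReal ?_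
        by_contra hcon
        push_neg at hcon
        exact absurd hsle (not_le.2 (hin s hs0 hcon.le).2)
      rw [Set.indicator_of_mem hmem]
      exact le_min hlow hhigh
    · rw [Set.indicator_of_notMem hmem]
      exact zero_le
  calc ENNReal.ofReal t₀ * P (A n)
      = ∫⁻ ω, (A n).indicator (fun _ => ENNReal.ofReal t₀) ω ∂P := by
        rw [lintegral_indicator (hAmeas n), setLIntegral_const]
    _ ≤ ∫⁻ ω, min (hitLow X x b₁ ω) (hitHigh X x b₄ ω) ∂P := lintegral_mono_ae key

end MFGPaper
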